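/- Let γ be a doubly indexed sequence whose moment bilinear form is positive semidefinite, and which admits an analytic characteristic polynomial P(z) = ∏_{i=1}^r (z - λ_i)^{n_i} ∈ ℂ[z] (i.e., the Riesz functional annihilates conj(z)^m z^n P(z) for all m, n). Then ∏_{i=1}^r (z - λ_i) (with all multiplicities reduced to 1) is also a characteristic polynomial of γ. In particular the minimal analytic characteristic polynomial has distinct roots. -/

import Mathlib

open Polynomial Complex

namespace MCP

open Finsupp AddMonoidAlgebra

noncomputable section

abbrev A : Type := AddMonoidAlgebra ℂ (ℕ × ℕ)

abbrev sg (p : ℕ × ℕ) (c : ℂ) : A := AddMonoidAlgebra.single p c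

def Lam (γ : ℕ → ℕ → ℂ) (x : A) : ℂ := Finsupp.sum x.coeff fun p c => c * γ p.1 p.2

variable (γ : ℕ → ℕ → ℂ)

lemma Lam_zero : Lam γ 0 = 0 := Finsupp.sum_zero_index

lemma Lam_add (x y : A) : Lam γ (x + y) = Lam γ x + Lam γ y :=
  Finsupp.sum_add_index' (fun p => by simp) (fun p b c => by ring)

lemma Lam_single (p : ℕ × ℕ) (c : ℂ) : Lam γ (sg p c) = c * γ p.1 p.2 :=
  Finsupp.sum_single_index (by simp)

lemma Lam_sum {ι : Type*} (s : Finset ι) (f : ι → A) :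
    Lam γ (∑ i ∈ s, f i) = ∑ i ∈ s, Lam γ (f i) := by
  induction s using Finset.cons_induction with
  | empty => simp [Lam_zero]
  | cons a s ha ih => rw [Finset.sum_cons, Finset.sum_cons, Lam_add, ih]

/-- the star monoid hom on exponents -/
def stg : Multiplicative (ℕ × ℕ) →* A where
  toFun p := sg (Multiplicative.toAdd p).swap 1
  map_one' := by simp [AddMonoidAlgebra.one_def]
  map_mul' p q := by
    rw [AddMonoidAlgebra.single_mul_single]
    simp [Prod.swap]

def st : A →+* A :=
  AddMonoidAlgebra.liftNCRingHom (AddMonoidAlgebra.singleZeroRingHom.comp (starRingEnd ℂ)) stg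
    (fun _ _ => Commute.all _ _)

lemma st_single (p : ℕ × ℕ) (c : ℂ) :
    st (sg p c) = sg p.swap ((starRingEnd ℂ) c) := by
  show AddMonoidAlgebra.liftNC _ _ (AddMonoidAlgebra.single p c) = _
  rw [AddMonoidAlgebra.liftNC_single]
  show AddMonoidAlgebra.single (0,0) _ * AddMonoidAlgebra.single _ _ = _
  rw [AddMonoidAlgebra.single_mul_single]
  simp [stg]
  congr 1
  ext <;> simp

lemma st_st (x : A) : st (st x) = x := by
  induction x using AddMonoidAlgebra.induction with
  | zero => simp
  | single_add p c f hp hc ih =>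
    rw [map_add, map_add, st_single, st_single, ih, Prod.swap_swap]
    simp

lemma sum_st {N : Type*} [AddCommMonoid N] (x : A) (h : ℕ × ℕ → ℂ → N)
    (h0 : ∀ p, h p 0 = 0) (hadd : ∀ p b c, h p (b + c) = h p b + h p c) :
    Finsupp.sum (st x).coeff h = Finsupp.sum x.coeff fun q d => h q.swap ((starRingEnd ℂ) d) := by
  induction x using AddMonoidAlgebra.induction with
  | zero => rw [map_zero]; simp [Finsupp.sum_zero_index]
  | single_add p c f hp hc ih =>
    rw [map_add, st_single, AddMonoidAlgebra.coeff_add, AddMonoidAlgebra.coeff_add,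
      AddMonoidAlgebra.coeff_single, AddMonoidAlgebra.coeff_single, Finsupp.sum_add_index' h0 hadd,
      Finsupp.sum_add_index' (fun q => by simp [h0]) (fun q b c => by rw [map_add, hadd]),
      ih, Finsupp.sum_single_index (h0 _), Finsupp.sum_single_index (by simp [h0])]

lemma Lam_mul (x y : A) :
    Lam γ (x * y) = Finsupp.sum x.coeff fun p c => Finsupp.sum y.coeff fun q d =>
      c * d * γ (p.1 + q.1) (p.2 + q.2) := by
  rw [AddMonoidAlgebra.mul_def]
  simp only [Finsupp.sum]
  rw [Lam_sum]
  refine Finset.sum_congr rfl fun p hp => ?_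
  rw [Lam_sum]
  exact Finset.sum_congr rfl fun q hq => Lam_single γ _ _

lemma Lam_mul_st (x y : A) :
    Lam γ (x * st y) = Finsupp.sum x.coeff fun p c => Finsupp.sum y.coeff fun q d =>
      c * (starRingEnd ℂ) d * γ (p.1 + q.2) (p.2 + q.1) := by
  rw [Lam_mul]
  refine Finsupp.sum_congr fun p hp => ?_
  rw [sum_st y _ (fun q => by simp) (fun q b c => by ring)]
  rfl

lemma Lam_st (hherm : ∀ i j, γ j i = (starRingEnd ℂ) (γ i j)) (x : A) :
    Lam γ (st x) = (starRingEnd ℂ) (Lam γ x) := by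
  show Finsupp.sum (st x).coeff _ = (starRingEnd ℂ) (Finsupp.sum x.coeff _)
  rw [sum_st x _ (fun q => by simp) (fun q b c => by ring), map_finsuppSum]
  refine Finsupp.sum_congr fun q hq => ?_
  rw [map_mul, ← hherm]
  rfl

lemma Lam_sym (hherm : ∀ i j, γ j i = (starRingEnd ℂ) (γ i j)) (x y : A) :
    Lam γ (y * st x) = (starRingEnd ℂ) (Lam γ (x * st y)) := by
  have h : st (x * st y) = y * st x := by rw [map_mul, st_st, mul_comm]
  rw [← h, Lam_st γ hherm]

lemma Lam_C (t : ℂ) (w : A) : Lam γ (sg (0,0) t * w) = t * Lam γ w := by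
  rw [Lam_mul, AddMonoidAlgebra.coeff_single, Finsupp.sum_single_index (by simp [Finsupp.sum])]
  show Finsupp.sum w.coeff (fun q d => t * d * γ (0 + q.1) (0 + q.2)) = _
  rw [Lam, Finsupp.mul_sum]
  exact Finsupp.sum_congr fun q _ => by rw [zero_add, zero_add, mul_assoc]

lemma Lam_pos
    (hpos : ∀ (s : Finset (ℕ × ℕ)) (a : ℕ × ℕ → ℂ),
      0 ≤ (∑ p ∈ s, ∑ q ∈ s,
        a p * (starRingEnd ℂ) (a q) * γ (p.1 + q.2) (p.2 + q.1)).re ∧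
      (∑ p ∈ s, ∑ q ∈ s,
        a p * (starRingEnd ℂ) (a q) * γ (p.1 + q.2) (p.2 + q.1)).im = 0)
    (x : A) :
    0 ≤ (Lam γ (x * st x)).re ∧ (Lam γ (x * st x)).im = 0 := by
  have e : Lam γ (x * st x) = ∑ p ∈ Finsupp.support x.coeff, ∑ q ∈ Finsupp.support x.coeff,
      x.coeff p * (starRingEnd ℂ) (x.coeff q) * γ (p.1 + q.2) (p.2 + q.1) := by
    rw [Lam_mul_st]
    rfl
  rw [e]; exact hpos _ _

lemma Lam_cs
    (hherm : ∀ i j, γ j i = (starRingEnd ℂ) (γ i j))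
    (hpos : ∀ (s : Finset (ℕ × ℕ)) (a : ℕ × ℕ → ℂ),
      0 ≤ (∑ p ∈ s, ∑ q ∈ s,
        a p * (starRingEnd ℂ) (a q) * γ (p.1 + q.2) (p.2 + q.1)).re ∧
      (∑ p ∈ s, ∑ q ∈ s,
        a p * (starRingEnd ℂ) (a q) * γ (p.1 + q.2) (p.2 + q.1)).im = 0)
    (x : A) (hx : Lam γ (x * st x) = 0) (u : A) : Lam γ (u * st x) = 0 := by
  by_contra hc
  set c := Lam γ (u * st x) with hcdef
  have hns : 0 < Complex.normSq c := by rwa [Complex.normSq_pos]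
  set s : ℝ := ((Lam γ (u * st u)).re + 1) / (2 * Complex.normSq c) with hs
  set t : ℂ := -(s : ℂ) * c with ht
  set y : A := u + sg (0,0) t * x with hy
  have hsty : st y = st u + sg (0,0) ((starRingEnd ℂ) t) * st x := by
    rw [hy, map_add, map_mul, st_single]
    norm_num
  have hexp : y * st y = u * st u + sg (0,0) ((starRingEnd ℂ) t) * (u * st x)
      + sg (0,0) t * (x * st u) + sg (0,0) t * (sg (0,0) ((starRingEnd ℂ) t) * (x * st x)) := by
    rw [hy, hsty]; ring
  have hL : Lam γ (y * st y) = Lam γ (u * st u) + (starRingEnd ℂ) t * c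
      + t * (starRingEnd ℂ) c := by
    rw [hexp, Lam_add, Lam_add, Lam_add, Lam_C, Lam_C, Lam_C, Lam_C, hx,
      Lam_sym γ hherm u x, ← hcdef]
    ring
  have hct : (starRingEnd ℂ) t = -(s : ℂ) * (starRingEnd ℂ) c := by
    rw [ht, map_mul, map_neg, Complex.conj_ofReal]
  have hcc : c * (starRingEnd ℂ) c = (Complex.normSq c : ℂ) := Complex.mul_conj c
  have hL2 : Lam γ (y * st y)
      = Lam γ (u * st u) - ((2 * s * Complex.normSq c : ℝ) : ℂ) := by
    rw [hL, hct, ht]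
    have : -(s : ℂ) * (starRingEnd ℂ) c * c + -(s : ℂ) * c * (starRingEnd ℂ) c
        = -2 * (s : ℂ) * (c * (starRingEnd ℂ) c) := by ring
    rw [add_assoc, this, hcc]
    push_cast
    ring
  have h3 := (Lam_pos γ hpos y).1
  rw [hL2, Complex.sub_re, Complex.ofReal_re] at h3
  have h4 : 2 * s * Complex.normSq c = (Lam γ (u * st u)).re + 1 := by
    rw [hs]; field_simp
  rw [h4] at h3
  linarith

lemma ann_of_single (w : A) (h : ∀ p : ℕ × ℕ, Lam γ (sg p 1 * w) = 0) :
    ∀ u : A, Lam γ (u * w) = 0 := by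
  intro u
  induction u using AddMonoidAlgebra.induction with
  | zero => rw [zero_mul, Lam_zero]
  | single_add p c f hp hc ih =>
    rw [add_mul, Lam_add, ih, add_zero]
    have e : sg p c * w = sg (0,0) c * (sg p 1 * w) := by
      rw [← mul_assoc]
      congr 1
      rw [AddMonoidAlgebra.single_mul_single]
      simp
      congr 1
      ext <;> simp
    rw [e, Lam_C, h p, mul_zero]

lemma ann_st (hherm : ∀ i j, γ j i = (starRingEnd ℂ) (γ i j)) (w : A)
    (h : ∀ u : A, Lam γ (u * st w) = 0) : ∀ u : A, Lam γ (u * w) = 0 := by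
  intro u
  have h1 : Lam γ (st (st u * st w)) = (starRingEnd ℂ) (Lam γ (st u * st w)) :=
    Lam_st γ hherm _
  rw [h (st u), map_zero] at h1
  rw [map_mul, st_st, st_st] at h1
  exact h1

lemma sq_descent
    (hherm : ∀ i j, γ j i = (starRingEnd ℂ) (γ i j))
    (hpos : ∀ (s : Finset (ℕ × ℕ)) (a : ℕ × ℕ → ℂ),
      0 ≤ (∑ p ∈ s, ∑ q ∈ s,
        a p * (starRingEnd ℂ) (a q) * γ (p.1 + q.2) (p.2 + q.1)).re ∧
      (∑ p ∈ s, ∑ q ∈ s,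
        a p * (starRingEnd ℂ) (a q) * γ (p.1 + q.2) (p.2 + q.1)).im = 0)
    (x : A) (h : ∀ u : A, Lam γ (u * (x * x)) = 0) :
    ∀ u : A, Lam γ (u * x) = 0 := by
  have h1 : Lam γ ((x * st x) * st (x * st x)) = 0 := by
    have e : (x * st x) * st (x * st x) = (st x * st x) * (x * x) := by
      rw [map_mul, st_st]; ring
    rw [e]; exact h _
  have h2 : Lam γ (x * st x) = 0 := by
    have h3 := Lam_cs γ hherm hpos (x * st x) h1 1
    rwa [one_mul, map_mul, st_st, mul_comm] at h3
  exact ann_st γ hherm x (Lam_cs γ hherm hpos x h2)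

lemma pow_descent
    (hherm : ∀ i j, γ j i = (starRingEnd ℂ) (γ i j))
    (hpos : ∀ (s : Finset (ℕ × ℕ)) (a : ℕ × ℕ → ℂ),
      0 ≤ (∑ p ∈ s, ∑ q ∈ s,
        a p * (starRingEnd ℂ) (a q) * γ (p.1 + q.2) (p.2 + q.1)).re ∧
      (∑ p ∈ s, ∑ q ∈ s,
        a p * (starRingEnd ℂ) (a q) * γ (p.1 + q.2) (p.2 + q.1)).im = 0)
    (x : A) : ∀ k : ℕ, (∀ u : A, Lam γ (u * x ^ (2 ^ k)) = 0) →
    ∀ u : A, Lam γ (u * x) = 0 := by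
  intro k
  induction k with
  | zero => intro h; simpa using h
  | succ k ih =>
    intro h
    refine ih (sq_descent γ hherm hpos (x ^ (2 ^ k)) ?_)
    intro u
    have e : x ^ (2 ^ k) * x ^ (2 ^ k) = x ^ (2 ^ (k + 1)) := by
      rw [← pow_add, pow_succ, mul_two]
    rw [e]; exact h u

def emb : Polynomial ℂ →+* A :=
  (AddMonoidAlgebra.mapDomainRingHom ℂ (AddMonoidHom.inr ℕ ℕ)).comp
    (Polynomial.toFinsuppIso ℂ).toRingHom

lemma Lam_single_emb (m s : ℕ) (p : Polynomial ℂ) :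
    Lam γ (sg (m, s) 1 * emb p) = ∑ k ∈ p.support, p.coeff k * γ m (s + k) := by
  rw [Lam_mul, AddMonoidAlgebra.coeff_single, Finsupp.sum_single_index (by simp [Finsupp.sum])]
  have he : (emb p : A).coeff = Finsupp.mapDomain (⇑(AddMonoidHom.inr ℕ ℕ)) p.toFinsupp.coeff := rfl
  have hinj : Function.Injective (⇑(AddMonoidHom.inr ℕ ℕ)) := by
    intro a b hab
    simpa using congrArg Prod.snd hab
  rw [he, Finsupp.sum_mapDomain_index_inj hinj]
  simp only [Finsupp.sum, AddMonoidHom.inr_apply, one_mul, add_zero]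
  rfl

end

end MCP

/-- If the moment form of `γ` is positive semidefinite and
`P(z) = ∏ (z - λᵢ)^{nᵢ}` is an analytic characteristic polynomial of `γ`
(i.e. the Riesz functional annihilates `z̄^m z^s P(z)` for all `m, s`), then the
squarefree polynomial `∏ (z - λᵢ)` is also a characteristic polynomial of `γ`. -/
theorem minimal_char_poly_distinct_roots
    (γ : ℕ → ℕ → ℂ)
    (hherm : ∀ i j, γ j i = (starRingEnd ℂ) (γ i j))
    (hpos : ∀ (s : Finset (ℕ × ℕ)) (a : ℕ × ℕ → ℂ),
      0 ≤ (∑ p ∈ s, ∑ q ∈ s,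
        a p * (starRingEnd ℂ) (a q) * γ (p.1 + q.2) (p.2 + q.1)).re ∧
      (∑ p ∈ s, ∑ q ∈ s,
        a p * (starRingEnd ℂ) (a q) * γ (p.1 + q.2) (p.2 + q.1)).im = 0)
    (r : ℕ) (lam : Fin r → ℂ) (n : Fin r → ℕ) (hn : ∀ i, 1 ≤ n i)
    (hchar : ∀ m s : ℕ,
      ∑ k ∈ (∏ i, (X - C (lam i)) ^ n i : Polynomial ℂ).support,
        (∏ i, (X - C (lam i)) ^ n i : Polynomial ℂ).coeff k * γ m (s + k) = 0) :
    ∀ m s : ℕ,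
      ∑ k ∈ (∏ i, (X - C (lam i)) : Polynomial ℂ).support,
        (∏ i, (X - C (lam i)) : Polynomial ℂ).coeff k * γ m (s + k) = 0 := by
  intro m s
  classical
  set P : Polynomial ℂ := ∏ i, (X - C (lam i)) ^ n i with hPdef
  set Q : Polynomial ℂ := ∏ i, (X - C (lam i)) with hQdef
  rw [← MCP.Lam_single_emb γ m s Q]
  have hPann : ∀ u : MCP.A, MCP.Lam γ (u * MCP.emb P) = 0 := by
    refine MCP.ann_of_single γ _ (fun p => ?_)
    obtain ⟨m', s'⟩ := p
    rw [MCP.Lam_single_emb γ m' s' P]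
    exact hchar m' s'
  set M : ℕ := Finset.univ.sup n + 1 with hM
  have hnle : ∀ i, n i ≤ M :=
    fun i => le_trans (Finset.le_sup (Finset.mem_univ i)) (Nat.le_succ _)
  have hfact : Q ^ M = P * ∏ i, (X - C (lam i)) ^ (M - n i) := by
    rw [hPdef, hQdef, ← Finset.prod_pow, ← Finset.prod_mul_distrib]
    refine Finset.prod_congr rfl fun i _ => ?_
    rw [← pow_add, Nat.add_sub_cancel' (hnle i)]
  have hMle : M ≤ 2 ^ M := (Nat.lt_two_pow_self).le
  have hQpow : ∀ u : MCP.A, MCP.Lam γ (u * (MCP.emb Q) ^ (2 ^ M)) = 0 := by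
    intro u
    have e : (MCP.emb Q) ^ (2 ^ M)
        = (MCP.emb Q ^ (2 ^ M - M) * MCP.emb (∏ i, (X - C (lam i)) ^ (M - n i)))
          * MCP.emb P := by
      conv_rhs => rw [mul_assoc, ← map_mul,
        mul_comm (∏ i, (X - C (lam i)) ^ (M - n i)) P, ← hfact, map_pow, ← pow_add]
      congr 1
      omega
    rw [e, ← mul_assoc]
    exact hPann _
  exact MCP.pow_descent γ hherm hpos (MCP.emb Q) M hQpow _
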